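/- Let X = (X_t)_{t∈[0,1]} be a real-valued stochastic process with E[X_t²] < ∞ for all t, satisfying (A2) with constants C₂ > 0, H₂ ∈ (0,1] and (B⁺). Let a ∈ (0, 1/4], n = ⌊1/a⌋, and set ξ_i = X_{ia} − X_{(i−1)a} for 2 ≤ i ≤ n. Then ∑_{i=2}^{n} ∑_{j=2}^{n} ( E[ξ_i ξ_j] )² ≤ C₂² a^{2H₂}. -/

import Mathlib

open MeasureTheory Set

private lemma memL2_mul_integrable {Ω : Type*} [MeasurableSpace Ω] {P : Measure Ω}
    {f g : Ω → ℝ} (hf : MemLp f 2 P) (hg : MemLp g 2 P) :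
    Integrable (fun ω => f ω * g ω) P := by
  refine (hf.integrable_sq.add hg.integrable_sq).mono' (hf.1.mul hg.1) ?_
  filter_upwards with ω
  simp only [Real.norm_eq_abs, abs_mul, Pi.add_apply]
  nlinarith [sq_nonneg (|f ω| - |g ω|), sq_abs (f ω), sq_abs (g ω), abs_nonneg (f ω),
    abs_nonneg (g ω)]

/-- Inequality (3.5): for a square-integrable process on `[0,1]` satisfying (A2) and (B⁺),
with `a ∈ (0,1/4]`, `n = ⌊1/a⌋` and `ξᵢ = X_{ia} - X_{(i-1)a}`, one has
`∑_{i,j=2}^{n} (E[ξᵢ ξⱼ])² ≤ C₂² a^{2H₂}`. -/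
theorem sum_sq_crossCov_le_of_Bplus {Ω : Type*} [MeasurableSpace Ω]
    (P : Measure Ω) [IsProbabilityMeasure P] (X : ℝ → Ω → ℝ)
    (C₂ H₂ a : ℝ)
    (hL2 : ∀ t ∈ Set.Icc (0 : ℝ) 1, MemLp (X t) 2 P)
    (hC₂ : 0 < C₂) (hH₂ : H₂ ∈ Set.Ioc (0 : ℝ) 1)
    (hA2 : ∀ s ∈ Set.Icc (0 : ℝ) 1, ∀ t ∈ Set.Icc (0 : ℝ) 1,
      ∫ ω, (X t ω - X s ω) ^ 2 ∂P ≤ C₂ * |t - s| ^ (2 * H₂))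
    (hB : ∀ s₁ t₁ s₂ t₂ : ℝ, 0 ≤ s₁ → s₁ ≤ t₁ → t₁ ≤ s₂ → s₂ ≤ t₂ → t₂ ≤ 1 →
      0 ≤ ∫ ω, (X t₁ ω - X s₁ ω) * (X t₂ ω - X s₂ ω) ∂P)
    (ha : a ∈ Set.Ioc (0 : ℝ) (1 / 4)) :
    ∑ i ∈ Finset.Icc 2 ⌊1 / a⌋₊, ∑ j ∈ Finset.Icc 2 ⌊1 / a⌋₊,
      (∫ ω, (X (i * a) ω - X ((i - 1 : ℝ) * a) ω)
            * (X (j * a) ω - X ((j - 1 : ℝ) * a) ω) ∂P) ^ 2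
      ≤ C₂ ^ 2 * a ^ (2 * H₂) := by
  obtain ⟨ha0, ha4⟩ := ha
  obtain ⟨hH0, hH1⟩ := hH₂
  set n := ⌊1 / a⌋₊ with hn
  set ξ : ℕ → Ω → ℝ := fun i ω => X (i * a) ω - X ((i - 1 : ℝ) * a) ω with hξ
  have hn2 : 2 ≤ n := by
    rw [hn]
    apply Nat.le_floor
    rw [le_div_iff₀ ha0]
    push_cast
    linarith
  have hna : (n : ℝ) * a ≤ 1 := by
    have h1 : (n : ℝ) ≤ 1 / a := Nat.floor_le (by positivity)
    calc (n : ℝ) * a ≤ (1 / a) * a := by nlinarith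
    _ = 1 := by field_simp
  -- membership of grid points in [0,1]
  have hmem : ∀ i ∈ Finset.Icc 2 n,
      ((i - 1 : ℝ) * a ∈ Set.Icc (0:ℝ) 1 ∧ (i : ℝ) * a ∈ Set.Icc (0:ℝ) 1) := by
    intro i hi
    rw [Finset.mem_Icc] at hi
    have h2 : (2 : ℝ) ≤ (i : ℝ) := by exact_mod_cast hi.1
    have hle : (i : ℝ) ≤ (n : ℝ) := by exact_mod_cast hi.2
    have hia : (i : ℝ) * a ≤ 1 := le_trans (by nlinarith) hna
    constructor
    · exact ⟨by nlinarith, by nlinarith⟩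
    · exact ⟨by nlinarith, hia⟩
  have hξL2 : ∀ i ∈ Finset.Icc 2 n, MemLp (ξ i) 2 P := fun i hi =>
    (hL2 _ (hmem i hi).2).sub (hL2 _ (hmem i hi).1)
  set c : ℕ → ℕ → ℝ := fun i j => ∫ ω, ξ i ω * ξ j ω ∂P with hc
  set M : ℝ := C₂ * a ^ (2 * H₂) with hM
  have hM0 : 0 ≤ M := by positivity
  -- diagonal bound
  have hdiag : ∀ i ∈ Finset.Icc 2 n, ∫ ω, (ξ i ω) ^ 2 ∂P ≤ M := by
    intro i hi
    have h := hA2 _ (hmem i hi).1 _ (hmem i hi).2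
    have he : (i : ℝ) * a - ((i : ℝ) - 1) * a = a := by ring
    rwa [he, abs_of_pos ha0] at h
  -- nonnegativity of cross covariances
  have hnonneg : ∀ i ∈ Finset.Icc 2 n, ∀ j ∈ Finset.Icc 2 n, 0 ≤ c i j := by
    have key : ∀ i ∈ Finset.Icc 2 n, ∀ j ∈ Finset.Icc 2 n, i < j → 0 ≤ c i j := by
      intro i hi j hj hij
      have h2 : (2 : ℝ) ≤ (i : ℝ) := by
        exact_mod_cast (Finset.mem_Icc.mp hi).1
      have hij' : (i : ℝ) + 1 ≤ (j : ℝ) := by exact_mod_cast hij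
      exact hB ((i - 1 : ℝ) * a) ((i : ℝ) * a) ((j - 1 : ℝ) * a) ((j : ℝ) * a)
        (by nlinarith) (by nlinarith) (by nlinarith) (by nlinarith)
        ((hmem j hj).2.2)
    intro i hi j hj
    rcases lt_trichotomy i j with h | h | h
    · exact key i hi j hj h
    · subst h
      exact integral_nonneg fun ω => mul_self_nonneg _
    · have := key j hj i hi h
      have hcomm : c i j = c j i := by
        simp only [hc]
        exact integral_congr_ae (Filter.Eventually.of_forall fun ω => mul_comm _ _)
      rw [hcomm]; exact this
  -- cross covariances bounded by M
  have hcross : ∀ i ∈ Finset.Icc 2 n, ∀ j ∈ Finset.Icc 2 n, c i j ≤ M := by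
    intro i hi j hj
    have hfi := hξL2 i hi
    have hfj := hξL2 j hj
    have h0 : 0 ≤ ∫ ω, (ξ i ω - ξ j ω) ^ 2 ∂P := integral_nonneg fun ω => sq_nonneg _
    have hint : Integrable (fun ω => ξ i ω * ξ j ω) P := memL2_mul_integrable hfi hfj
    have hexp : ∫ ω, (ξ i ω - ξ j ω) ^ 2 ∂P
        = ∫ ω, (ξ i ω) ^ 2 ∂P - 2 * ∫ ω, ξ i ω * ξ j ω ∂P + ∫ ω, (ξ j ω) ^ 2 ∂P := by
      have hre : ∀ ω, (ξ i ω - ξ j ω) ^ 2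
          = ((ξ i ω) ^ 2 - 2 * (ξ i ω * ξ j ω)) + (ξ j ω) ^ 2 := fun ω => by ring
      have hI1 : Integrable (fun ω => (ξ i ω) ^ 2 - 2 * (ξ i ω * ξ j ω)) P :=
        hfi.integrable_sq.sub (hint.const_mul 2)
      have hI2 : Integrable (fun ω => 2 * (ξ i ω * ξ j ω)) P := hint.const_mul 2
      simp_rw [hre]
      rw [integral_add hI1 hfj.integrable_sq, integral_sub hfi.integrable_sq hI2,
        integral_const_mul]
    have h1 := hdiag i hi
    have h2 := hdiag j hj
    simp only [hc]
    linarith [hexp ▸ h0]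
  -- telescoping sum
  have hD2 : MemLp (fun ω => X ((n : ℝ) * a) ω - X a ω) 2 P := by
    refine (hL2 _ ?_).sub (hL2 _ ?_)
    · exact ⟨by positivity, hna⟩
    · exact ⟨le_of_lt ha0, by linarith⟩
  have htele : ∀ ω, ∑ i ∈ Finset.Icc 2 n, ξ i ω = X ((n : ℝ) * a) ω - X a ω := by
    intro ω
    set f : ℕ → ℝ := fun k => X ((k + 1 : ℕ) * a) ω with hf
    have hstep : ∀ k, ξ (2 + k) ω = f (k + 1) - f k := by
      intro k
      simp only [hξ, hf]
      push_cast
      ring_nf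
    rw [← Finset.Ico_add_one_right_eq_Icc, Finset.sum_Ico_eq_sum_range]
    simp_rw [hstep]
    rw [Finset.sum_range_sub f (n + 1 - 2)]
    have hn1 : n + 1 - 2 + 1 = n := by omega
    simp only [hf, hn1]
    norm_num
  -- total sum of covariances
  have hsum : ∑ i ∈ Finset.Icc 2 n, ∑ j ∈ Finset.Icc 2 n, c i j
      = ∫ ω, (X ((n : ℝ) * a) ω - X a ω) ^ 2 ∂P := by
    have hrow : ∀ i ∈ Finset.Icc 2 n, ∑ j ∈ Finset.Icc 2 n, c i j
        = ∫ ω, ξ i ω * (X ((n : ℝ) * a) ω - X a ω) ∂P := by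
      intro i hi
      rw [← integral_finset_sum _ (fun j hj => memL2_mul_integrable (hξL2 i hi) (hξL2 j hj))]
      congr 1
      ext ω
      rw [← Finset.mul_sum, htele ω]
    rw [Finset.sum_congr rfl hrow,
      ← integral_finset_sum _ (fun i hi => memL2_mul_integrable (hξL2 i hi) hD2)]
    congr 1
    ext ω
    rw [← Finset.sum_mul, htele ω]
    ring
  have hsum_le : ∑ i ∈ Finset.Icc 2 n, ∑ j ∈ Finset.Icc 2 n, c i j ≤ C₂ := by
    rw [hsum]
    have h := hA2 a ⟨le_of_lt ha0, by linarith⟩ ((n : ℝ) * a) ⟨by positivity, hna⟩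
    have hn1 : (1 : ℝ) ≤ (n : ℝ) := by exact_mod_cast le_trans (by norm_num) hn2
    have habs : |(n : ℝ) * a - a| ≤ 1 := by
      rw [abs_of_nonneg (by nlinarith)]
      nlinarith
    have hrpow : |(n : ℝ) * a - a| ^ (2 * H₂) ≤ 1 :=
      Real.rpow_le_one (abs_nonneg _) habs (by positivity)
    nlinarith
  -- final computation
  calc ∑ i ∈ Finset.Icc 2 n, ∑ j ∈ Finset.Icc 2 n, (c i j) ^ 2
      ≤ ∑ i ∈ Finset.Icc 2 n, ∑ j ∈ Finset.Icc 2 n, M * c i j := by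
        refine Finset.sum_le_sum fun i hi => Finset.sum_le_sum fun j hj => ?_
        have h0 := hnonneg i hi j hj
        have h1 := hcross i hi j hj
        nlinarith
    _ = M * ∑ i ∈ Finset.Icc 2 n, ∑ j ∈ Finset.Icc 2 n, c i j := by
        simp_rw [← Finset.mul_sum]
    _ ≤ M * C₂ := mul_le_mul_of_nonneg_left hsum_le hM0
    _ = C₂ ^ 2 * a ^ (2 * H₂) := by rw [hM]; ring
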